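/- Conservation of angular momentum in the Euler two-center problem: if I ⊆ ℝ is an open interval and q, p : I → ℝ³ are differentiable functions such that for every t ∈ I one has q(t) ∉ {o₁, o₂}, q'(t) = p(t), and p'(t) = −∇V(q(t)), then the function t ↦ L_z(q(t), p(t)) is constant on I. -/

import Mathlib

noncomputable section

open Real Filter Topology
open scoped RealInnerProductSpace

/-- Euclidean 3-space. -/
abbrev R3 : Type := EuclideanSpace ℝ (Fin 3)

/-- The vector `(x, y, z)` in `R3`. -/
def vec3 (x y z : ℝ) : R3 := (WithLp.equiv 2 (Fin 3 → ℝ)).symm ![x, y, z]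

/-- The first center `o₁ = (0,0,-a)`. -/
def ctr1 (a : ℝ) : R3 := vec3 0 0 (-a)

/-- The second center `o₂ = (0,0,a)`. -/
def ctr2 (a : ℝ) : R3 := vec3 0 0 a

/-- The Euler two-center potential `V(q) = -μ₁/r₁(q) - μ₂/r₂(q)`. -/
def eulerV (a μ1 μ2 : ℝ) (q : R3) : ℝ := -μ1 / ‖q - ctr1 a‖ - μ2 / ‖q - ctr2 a‖

/-- The angular momentum `L_z(q,p) = x p_y - y p_x`. -/
def angMom (q p : R3) : ℝ := q 0 * p 1 - q 1 * p 0

/-- The cross product `q × p` in `R3`. -/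
def cross3 (q p : R3) : R3 :=
  vec3 (q 1 * p 2 - q 2 * p 1) (q 2 * p 0 - q 0 * p 2) (q 0 * p 1 - q 1 * p 0)

/-- The Euler Hamiltonian `H(q,p) = ‖p‖²/2 + V(q)`. -/
def eulerH (a μ1 μ2 : ℝ) (q p : R3) : ℝ := ‖p‖ ^ 2 / 2 + eulerV a μ1 μ2 q

/-- The separation constant
`G(q,p) = H + (‖q×p‖² - a²(pₓ²+p_y²))/2 + a(z+a)μ₁/r₁ - a(z-a)μ₂/r₂`. -/
def eulerG (a μ1 μ2 : ℝ) (q p : R3) : ℝ :=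
  eulerH a μ1 μ2 q p + (‖cross3 q p‖ ^ 2 - a ^ 2 * ((p 0) ^ 2 + (p 1) ^ 2)) / 2
    + a * (q 2 + a) * μ1 / ‖q - ctr1 a‖ - a * (q 2 - a) * μ2 / ‖q - ctr2 a‖

lemma grad_aux (c : R3) (μ : ℝ) (q : R3) (hq : q ≠ c) :
    HasGradientAt (fun x => -μ / ‖x - c‖) ((μ / ‖q - c‖ ^ 3) • (q - c)) q := by
  have hr : 0 < ‖q - c‖ := by
    rw [norm_pos_iff]; exact sub_ne_zero.mpr hq
  set r := ‖q - c‖ with hrdef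
  -- inner self function
  have hsub : HasFDerivAt (fun x : R3 => x - c) (ContinuousLinearMap.id ℝ R3) q :=
    (hasFDerivAt_id q).sub_const c
  have hφ : HasFDerivAt (fun x : R3 => (⟪x - c, x - c⟫ : ℝ))
      ((fderivInnerCLM ℝ (q - c, q - c)).comp
        ((ContinuousLinearMap.id ℝ R3).prod (ContinuousLinearMap.id ℝ R3))) q :=
    hsub.inner ℝ hsub
  have hs0 : (⟪q - c, q - c⟫ : ℝ) = r ^ 2 := real_inner_self_eq_norm_sq _
  have hs0pos : (0:ℝ) < r ^ 2 := by positivity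
  -- scalar function h s = -μ / √s
  have hsqrt : HasDerivAt Real.sqrt (1 / (2 * Real.sqrt (r ^ 2))) (r ^ 2) :=
    Real.hasDerivAt_sqrt (ne_of_gt hs0pos)
  have hsqrtval : Real.sqrt (r ^ 2) = r := Real.sqrt_sq hr.le
  have hinv : HasDerivAt (fun s => (Real.sqrt s)⁻¹) (-(1 / (2 * r)) / r ^ 2) (r ^ 2) := by
    have := hsqrt.inv (by rw [hsqrtval]; exact hr.ne')
    rwa [hsqrtval] at this
  have hh : HasDerivAt (fun s => -μ / Real.sqrt s) (μ / (2 * r ^ 3)) (r ^ 2) := by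
    have h1 : (fun s : ℝ => -μ / Real.sqrt s) = fun s => -μ * (Real.sqrt s)⁻¹ := by
      funext s; rw [div_eq_mul_inv]
    rw [h1]
    have := hinv.const_mul (-μ)
    refine this.congr_deriv ?_
    have : r ≠ 0 := hr.ne'
    field_simp
  have hcomp : HasFDerivAt (fun x : R3 => -μ / Real.sqrt (⟪x - c, x - c⟫ : ℝ))
      ((μ / (2 * r ^ 3)) • ((fderivInnerCLM ℝ (q - c, q - c)).comp
        ((ContinuousLinearMap.id ℝ R3).prod (ContinuousLinearMap.id ℝ R3)))) q := by
    have := HasDerivAt.comp_hasFDerivAt q (by rw [hs0]; exact hh) hφ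
    exact this
  have hfun : (fun x : R3 => -μ / ‖x - c‖) =
      (fun x : R3 => -μ / Real.sqrt (⟪x - c, x - c⟫ : ℝ)) := by
    funext x
    rw [real_inner_self_eq_norm_sq, Real.sqrt_sq (norm_nonneg _)]
  rw [hasGradientAt_iff_hasFDerivAt, hfun]
  refine hcomp.congr_fderiv ?_
  ext v
  simp only [InnerProductSpace.toDual_apply_apply, ContinuousLinearMap.coe_smul',
    Pi.smul_apply, ContinuousLinearMap.coe_comp', Function.comp_apply,
    ContinuousLinearMap.prod_apply, ContinuousLinearMap.coe_id', id_eq,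
    fderivInnerCLM_apply, real_inner_smul_left, smul_eq_mul]
  rw [real_inner_comm v (q - c)]
  ring

lemma hasGradientAt_add {f g : R3 → ℝ} {f' g' : R3} {x : R3}
    (hf : HasGradientAt f f' x) (hg : HasGradientAt g g' x) :
    HasGradientAt (fun y => f y + g y) (f' + g') x := by
  rw [hasGradientAt_iff_hasFDerivAt] at *
  rw [map_add]; exact hf.add hg

lemma ctr1_apply0 (a : ℝ) : ctr1 a 0 = 0 := rfl
lemma ctr1_apply1 (a : ℝ) : ctr1 a 1 = 0 := rfl
lemma ctr2_apply0 (a : ℝ) : ctr2 a 0 = 0 := rfl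
lemma ctr2_apply1 (a : ℝ) : ctr2 a 1 = 0 := rfl

lemma grad_eulerV (a μ1 μ2 : ℝ) (q : R3) (h1 : q ≠ ctr1 a) (h2 : q ≠ ctr2 a) :
    gradient (eulerV a μ1 μ2) q =
      (μ1 / ‖q - ctr1 a‖ ^ 3) • (q - ctr1 a) + (μ2 / ‖q - ctr2 a‖ ^ 3) • (q - ctr2 a) := by
  have h : HasGradientAt (eulerV a μ1 μ2)
      ((μ1 / ‖q - ctr1 a‖ ^ 3) • (q - ctr1 a) + (μ2 / ‖q - ctr2 a‖ ^ 3) • (q - ctr2 a)) q := by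
    have hfun : eulerV a μ1 μ2 =
        fun x => (-μ1 / ‖x - ctr1 a‖) + (-μ2 / ‖x - ctr2 a‖) := by
      funext x
      rw [eulerV, sub_eq_add_neg, ← neg_div]
    rw [hfun]
    exact hasGradientAt_add (grad_aux (ctr1 a) μ1 q h1) (grad_aux (ctr2 a) μ2 q h2)
  exact h.gradient


/-- Conservation of the angular momentum `L_z` along solutions of the
Euler two-center problem. -/
theorem statement0 (a μ1 μ2 : ℝ) (ha : 0 < a) (t₁ t₂ : ℝ) (q p : ℝ → R3)
    (hcent : ∀ t ∈ Set.Ioo t₁ t₂, q t ≠ ctr1 a ∧ q t ≠ ctr2 a)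
    (hq : ∀ t ∈ Set.Ioo t₁ t₂, HasDerivAt q (p t) t)
    (hp : ∀ t ∈ Set.Ioo t₁ t₂, HasDerivAt p (-gradient (eulerV a μ1 μ2) (q t)) t) :
    ∀ s ∈ Set.Ioo t₁ t₂, ∀ t ∈ Set.Ioo t₁ t₂,
      angMom (q s) (p s) = angMom (q t) (p t) := by
  set f : ℝ → ℝ := fun t => angMom (q t) (p t) with hf
  have hderiv : ∀ t ∈ Set.Ioo t₁ t₂, HasDerivAt f 0 t := by
    intro t ht
    obtain ⟨h1, h2⟩ := hcent t ht
    set G : R3 := gradient (eulerV a μ1 μ2) (q t) with hG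
    set lam : ℝ := μ1 / ‖q t - ctr1 a‖ ^ 3 + μ2 / ‖q t - ctr2 a‖ ^ 3 with hlam
    have hGeq := grad_eulerV a μ1 μ2 (q t) h1 h2
    have hG0 : G 0 = lam * q t 0 := by
      rw [hG, hGeq]
      simp only [PiLp.add_apply, PiLp.smul_apply, PiLp.sub_apply, smul_eq_mul,
        ctr1_apply0, ctr2_apply0, hlam]
      ring
    have hG1 : G 1 = lam * q t 1 := by
      rw [hG, hGeq]
      simp only [PiLp.add_apply, PiLp.smul_apply, PiLp.sub_apply, smul_eq_mul,
        ctr1_apply1, ctr2_apply1, hlam]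
      ring
    have hqc : ∀ i : Fin 3, HasDerivAt (fun s => q s i) (p t i) t := by
      intro i
      have := (EuclideanSpace.proj i (𝕜 := ℝ)).hasFDerivAt.comp_hasDerivAt t (hq t ht)
      exact this
    have hpc : ∀ i : Fin 3, HasDerivAt (fun s => p s i) (-(G i)) t := by
      intro i
      have := (EuclideanSpace.proj i (𝕜 := ℝ)).hasFDerivAt.comp_hasDerivAt t (hp t ht)
      exact this
    have hmain : HasDerivAt f
        (p t 0 * p t 1 + q t 0 * (-(G 1)) - (p t 1 * p t 0 + q t 1 * (-(G 0)))) t :=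
      ((hqc 0).mul (hpc 1)).sub ((hqc 1).mul (hpc 0))
    have : p t 0 * p t 1 + q t 0 * (-(G 1)) - (p t 1 * p t 0 + q t 1 * (-(G 0))) = 0 := by
      rw [hG0, hG1]; ring
    rwa [this] at hmain
  intro s hs t ht
  refine (convex_Ioo t₁ t₂).is_const_of_fderivWithin_eq_zero (f := f)
    (fun x hx => ((hderiv x hx).differentiableAt).differentiableWithinAt) ?_ hs ht
  intro x hx
  rw [fderivWithin_of_isOpen isOpen_Ioo hx]
  have := (hderiv x hx).hasFDerivAt.fderiv
  rw [this]
  ext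
  simp
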